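/- Let (Σ, μ) be a measure space, σ : Σ → ℝ a measurable function with σ(z) > 0 for all z, g ∈ ℝ a constant, and let H, L : ℝ² × Σ → ℝ and φ : ℝ² × Σ → ℂ be functions such that for every z ∈ Σ the maps t ↦ H(t,z), t ↦ L(t,z), t ↦ φ(t,z) are twice continuously differentiable with H(t,z)·L(t,z) = |φ(t,z)|²/σ(z)², L(t,z) ≥ 0, φ(0,z) = 0, H(0,z) = 1; suppose moreover that H, L and their first and second t-partial derivatives are dominated, uniformly for t in a neighborhood of 0, by μ-integrable functions of z (so that differentiation under the integral sign is valid), and that ∫_Σ (H(t,z) − L(t,z))·σ(z) dμ(z) = g for all t near 0. Define E(t) = ∫_Σ (H(t,z) + L(t,z))·σ(z) dμ(z). Then E(t) = g + 2∫_Σ L(t,z)σ(z) dμ(z) ≥ g = E(0) for all t near 0, both first partial derivatives of E vanish at t = 0, and for all i, j ∈ {1,2}: ∂²E/∂tᵢ∂tⱼ(0) = 4 ∫_Σ Re(∂φ/∂tᵢ(0,z) · conj(∂φ/∂tⱼ(0,z))) / σ(z) dμ(z). -/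

import Mathlib

open MeasureTheory

open Topology Filter

section Aux

lemma hasFDerivAt_fderiv_of_contDiff {f : ℝ × ℝ → ℝ} (hf : ContDiff ℝ 2 f) (x : ℝ × ℝ) :
    HasFDerivAt (fderiv ℝ f) (fderiv ℝ (fderiv ℝ f) x) x :=
  (((hf.fderiv_right (m := 1) (by norm_num)).differentiable one_ne_zero) x).hasFDerivAt

lemma fderiv2_mul {f g : ℝ × ℝ → ℝ} (hf : ContDiff ℝ 2 f) (hg : ContDiff ℝ 2 g)
    (x u v : ℝ × ℝ) :
    fderiv ℝ (fderiv ℝ (fun t => f t * g t)) x u v =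
      g x * fderiv ℝ (fderiv ℝ f) x u v + fderiv ℝ g x u * fderiv ℝ f x v +
      f x * fderiv ℝ (fderiv ℝ g) x u v + fderiv ℝ f x u * fderiv ℝ g x v := by
  have hfd : Differentiable ℝ f := hf.differentiable two_ne_zero
  have hgd : Differentiable ℝ g := hg.differentiable two_ne_zero
  have h1 : fderiv ℝ (fun t => f t * g t)
      = fun t => f t • fderiv ℝ g t + g t • fderiv ℝ f t := by
    funext t; exact fderiv_mul (hfd t) (hgd t)
  rw [h1]
  have hA : HasFDerivAt (fun t => f t • fderiv ℝ g t)
      (f x • fderiv ℝ (fderiv ℝ g) x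
        + (fderiv ℝ f x).smulRight (fderiv ℝ g x)) x :=
    (hfd x).hasFDerivAt.smul (hasFDerivAt_fderiv_of_contDiff hg x)
  have hB : HasFDerivAt (fun t => g t • fderiv ℝ f t)
      (g x • fderiv ℝ (fderiv ℝ f) x
        + (fderiv ℝ g x).smulRight (fderiv ℝ f x)) x :=
    (hgd x).hasFDerivAt.smul (hasFDerivAt_fderiv_of_contDiff hf x)
  rw [(show HasFDerivAt (fun t => f t • fderiv ℝ g t + g t • fderiv ℝ f t) _ x from hA.add hB).fderiv]
  simp only [ContinuousLinearMap.add_apply, ContinuousLinearMap.smul_apply,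
    ContinuousLinearMap.smulRight_apply, smul_eq_mul]
  ring

lemma clm_decomp (A : (ℝ × ℝ) →L[ℝ] ℝ) :
    A = A (1, 0) • ContinuousLinearMap.fst ℝ ℝ ℝ + A (0, 1) • ContinuousLinearMap.snd ℝ ℝ ℝ := by
  apply ContinuousLinearMap.ext
  rintro ⟨x, y⟩
  have h : ((x, y) : ℝ × ℝ) = x • ((1 : ℝ), (0 : ℝ)) + y • ((0 : ℝ), (1 : ℝ)) := by
    simp [Prod.ext_iff]
  rw [h, map_add, A.map_smul, A.map_smul]
  simp [mul_comm]

/-- measurability of the second derivative evaluated in one slot -/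
lemma aesm_second_deriv {Ω : Type*} [MeasurableSpace Ω] {μ : Measure Ω}
    (L : ℝ × ℝ → Ω → ℝ) (hLdiff : ∀ z, ContDiff ℝ 2 (fun t => L t z))
    (hL1meas : ∀ t, AEStronglyMeasurable (fun z => fderiv ℝ (fun s => L s z) t) μ)
    (v : ℝ × ℝ) :
    AEStronglyMeasurable (fun z =>
      (ContinuousLinearMap.apply ℝ ℝ v).comp
        (fderiv ℝ (fderiv ℝ (fun s => L s z)) 0)) μ := by
  have hsn : Tendsto (fun n : ℕ => ((n : ℝ) + 1)⁻¹) atTop (𝓝[≠] (0 : ℝ)) := by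
    apply tendsto_nhdsWithin_of_tendsto_nhds_of_eventually_within
    · simpa [one_div] using tendsto_one_div_add_atTop_nhds_zero_nat (𝕜 := ℝ)
    · exact Eventually.of_forall fun n =>
        Set.mem_compl_singleton_iff.mpr (by positivity)
  have comp : ∀ w : ℝ × ℝ, AEStronglyMeasurable
      (fun z => fderiv ℝ (fderiv ℝ (fun s => L s z)) 0 w v) μ := by
    intro w
    have hmeasn : ∀ n : ℕ, AEStronglyMeasurable (fun z =>
        (fderiv ℝ (fun s => L s z) ((((n : ℝ) + 1)⁻¹ : ℝ) • w) v
          - fderiv ℝ (fun s => L s z) 0 v) * (((((n : ℝ) + 1)⁻¹ : ℝ) - 0))⁻¹) μ := by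
      intro n
      have h1 : ∀ t : ℝ × ℝ, AEStronglyMeasurable
          (fun z => fderiv ℝ (fun s => L s z) t v) μ := fun t =>
        (ContinuousLinearMap.apply ℝ ℝ v).continuous.comp_aestronglyMeasurable (hL1meas t)
      exact ((h1 _).sub (h1 0)).mul_const _
    refine aestronglyMeasurable_of_tendsto_ae atTop hmeasn (Eventually.of_forall fun z => ?_)
    have h1 : HasFDerivAt (fun t => fderiv ℝ (fun s => L s z) t v)
        ((ContinuousLinearMap.apply ℝ ℝ v).comp
          (fderiv ℝ (fderiv ℝ (fun s => L s z)) 0)) 0 :=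
      (ContinuousLinearMap.apply ℝ ℝ v).hasFDerivAt.comp 0
        (hasFDerivAt_fderiv_of_contDiff (hLdiff z) 0)
    have h2 : HasDerivAt (fun s : ℝ => s • w) w 0 := by
      simpa using (hasDerivAt_id (0 : ℝ)).smul_const w
    have h3 : HasDerivAt (fun s : ℝ => fderiv ℝ (fun u => L u z) (s • w) v)
        (fderiv ℝ (fderiv ℝ (fun s => L s z)) 0 w v) 0 := by
      have h1' : HasFDerivAt (fun t => fderiv ℝ (fun s => L s z) t v)
          ((ContinuousLinearMap.apply ℝ ℝ v).comp
            (fderiv ℝ (fderiv ℝ (fun s => L s z)) 0)) ((0 : ℝ) • w) := by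
        rw [zero_smul]; exact h1
      have := h1'.comp_hasDerivAt (f := fun s : ℝ => s • w) 0 h2
      simpa [Function.comp_def] using this
    have h4 := (hasDerivAt_iff_tendsto_slope.mp h3).comp hsn
    refine h4.congr fun n => ?_
    simp [Function.comp, slope_def_field, div_eq_mul_inv]
  have hrw : (fun z => (ContinuousLinearMap.apply ℝ ℝ v).comp
      (fderiv ℝ (fderiv ℝ (fun s => L s z)) 0))
      = fun z => (fderiv ℝ (fderiv ℝ (fun s => L s z)) 0 (1, 0) v)
            • ContinuousLinearMap.fst ℝ ℝ ℝ
          + (fderiv ℝ (fderiv ℝ (fun s => L s z)) 0 (0, 1) v)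
            • ContinuousLinearMap.snd ℝ ℝ ℝ := by
    funext z
    rw [clm_decomp ((ContinuousLinearMap.apply ℝ ℝ v).comp
      (fderiv ℝ (fderiv ℝ (fun s => L s z)) 0))]
    simp
  rw [hrw]
  exact ((comp (1, 0)).smul aestronglyMeasurable_const).add
    ((comp (0, 1)).smul aestronglyMeasurable_const)

lemma pointwise_second_deriv
    {f l : ℝ × ℝ → ℝ} {p : ℝ × ℝ → ℂ} {c : ℝ} (hc : 0 < c)
    (hf : ContDiff ℝ 2 f) (hl : ContDiff ℝ 2 l) (hp : ContDiff ℝ 2 p)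
    (hfl : ∀ t, f t * l t = (‖p t‖) ^ 2 / c ^ 2)
    (hlpos : ∀ t, 0 ≤ l t) (hp0 : p 0 = 0) (hf0 : f 0 = 1) (u v : ℝ × ℝ) :
    fderiv ℝ (fderiv ℝ l) 0 u v =
      2 * ((fderiv ℝ p 0 u) * (starRingEnd ℂ) (fderiv ℝ p 0 v)).re / c ^ 2 := by
  have hpd : Differentiable ℝ p := hp.differentiable two_ne_zero
  have l0 : l 0 = 0 := by
    have h := hfl 0
    rw [hp0, hf0] at h
    simpa using h
  have Dl0 : fderiv ℝ l 0 = 0 := by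
    refine IsLocalMin.fderiv_eq_zero ?_
    exact Filter.Eventually.of_forall fun t => by rw [l0]; exact hlpos t
  -- reduce to the second derivative of |p|^2 / c^2
  set a : ℝ × ℝ → ℝ := fun t => (p t).re with ha_def
  set b : ℝ × ℝ → ℝ := fun t => (p t).im with hb_def
  have ha : ContDiff ℝ 2 a := Complex.reCLM.contDiff.comp hp
  have hb : ContDiff ℝ 2 b := Complex.imCLM.contDiff.comp hp
  have ha0 : a 0 = 0 := by simp [ha_def, hp0]
  have hb0 : b 0 = 0 := by simp [hb_def, hp0]
  have key : (fun t => f t * l t)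
      = fun t => (c ^ 2)⁻¹ * (a t * a t + b t * b t) := by
    funext t
    rw [hfl t, Complex.sq_norm, Complex.normSq_apply]
    ring
  -- second derivative of the left side is that of l
  have hLHS : fderiv ℝ (fderiv ℝ (fun t => f t * l t)) 0 u v
      = fderiv ℝ (fderiv ℝ l) 0 u v := by
    rw [fderiv2_mul hf hl]
    simp [l0, Dl0, hf0]
  -- second derivative of the right side
  have hr : ContDiff ℝ 2 (fun t => a t * a t + b t * b t) := (ha.mul ha).add (hb.mul hb)
  have hrd : Differentiable ℝ (fun t => a t * a t + b t * b t) := hr.differentiable two_ne_zero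
  have e1 : fderiv ℝ (fun t => (c ^ 2)⁻¹ * (a t * a t + b t * b t))
      = fun t => (c ^ 2)⁻¹ • fderiv ℝ (fun s => a s * a s + b s * b s) t := by
    funext t
    exact fderiv_const_mul (hrd t) _
  have e2 : fderiv ℝ (fun s => a s * a s + b s * b s)
      = fun t => fderiv ℝ (fun s => a s * a s) t + fderiv ℝ (fun s => b s * b s) t := by
    funext t
    exact fderiv_add ((ha.differentiable two_ne_zero t).mul (ha.differentiable two_ne_zero t))
      ((hb.differentiable two_ne_zero t).mul (hb.differentiable two_ne_zero t))
  have hRHS : fderiv ℝ (fderiv ℝ (fun t => (c ^ 2)⁻¹ * (a t * a t + b t * b t))) 0 u v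
      = (c ^ 2)⁻¹ * (fderiv ℝ (fderiv ℝ (fun s => a s * a s)) 0 u v
          + fderiv ℝ (fderiv ℝ (fun s => b s * b s)) 0 u v) := by
    rw [e1]
    have haa : HasFDerivAt (fderiv ℝ (fun s => a s * a s))
        (fderiv ℝ (fderiv ℝ (fun s => a s * a s)) 0) 0 :=
      hasFDerivAt_fderiv_of_contDiff (ha.mul ha) 0
    have hbb : HasFDerivAt (fderiv ℝ (fun s => b s * b s))
        (fderiv ℝ (fderiv ℝ (fun s => b s * b s)) 0) 0 :=
      hasFDerivAt_fderiv_of_contDiff (hb.mul hb) 0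
    have hsum : HasFDerivAt (fun t => fderiv ℝ (fun s => a s * a s) t
          + fderiv ℝ (fun s => b s * b s) t)
        (fderiv ℝ (fderiv ℝ (fun s => a s * a s)) 0
          + fderiv ℝ (fderiv ℝ (fun s => b s * b s)) 0) 0 := haa.add hbb
    have hsmul := hsum.const_smul ((c ^ 2)⁻¹)
    simp only [e2]
    rw [(show HasFDerivAt (fun t => (c ^ 2)⁻¹ • (fderiv ℝ (fun s => a s * a s) t
      + fderiv ℝ (fun s => b s * b s) t)) _ 0 from hsmul).fderiv]
    simp only [ContinuousLinearMap.smul_apply, ContinuousLinearMap.add_apply, smul_eq_mul]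
  -- second derivatives of the squares
  have haa2 : fderiv ℝ (fderiv ℝ (fun s => a s * a s)) 0 u v
      = 2 * (fderiv ℝ a 0 u * fderiv ℝ a 0 v) := by
    rw [fderiv2_mul ha ha]
    simp [ha0]
    ring
  have hbb2 : fderiv ℝ (fderiv ℝ (fun s => b s * b s)) 0 u v
      = 2 * (fderiv ℝ b 0 u * fderiv ℝ b 0 v) := by
    rw [fderiv2_mul hb hb]
    simp [hb0]
    ring
  -- first derivatives of re/im parts
  have hDa : fderiv ℝ a 0 = Complex.reCLM.comp (fderiv ℝ p 0) := by
    have h2 : a = ⇑Complex.reCLM ∘ p := rfl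
    rw [h2, (Complex.reCLM.hasFDerivAt.comp (0 : ℝ × ℝ) (hpd 0).hasFDerivAt).fderiv]
  have hDb : fderiv ℝ b 0 = Complex.imCLM.comp (fderiv ℝ p 0) := by
    have h2 : b = ⇑Complex.imCLM ∘ p := rfl
    rw [h2, (Complex.imCLM.hasFDerivAt.comp (0 : ℝ × ℝ) (hpd 0).hasFDerivAt).fderiv]
  rw [← hLHS, key, hRHS, haa2, hbb2, hDa, hDb]
  simp only [ContinuousLinearMap.comp_apply, Complex.reCLM_apply, Complex.imCLM_apply,
    Complex.mul_re, Complex.conj_re, Complex.conj_im]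
  field_simp
  ring

end Aux

/-- The two standard basis directions of `ℝ²`. -/
noncomputable def e2 : Fin 2 → ℝ × ℝ := ![(1, 0), (0, 1)]

lemma norm_e2 (i : Fin 2) : ‖e2 i‖ = 1 := by
  fin_cases i <;> simp [e2, Prod.norm_def]


set_option maxHeartbeats 1000000 in
set_option synthInstance.maxHeartbeats 200000 in
/-- Analytic content of Theorem 1.2 (varying the target): for a two-parameter family of
densities `H, L` with `H·L = |φ|²/σ²`, `φ(0,·) = 0`, `H(0,·) = 1`, `L ≥ 0`,
with integrands dominated (uniformly near `t = 0`) by integrable functions so that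
differentiation under the integral sign is valid, and with constant Jacobian integral
`∫ (H − L)σ = g`, the energy `E(t) = ∫ (H + L)σ` satisfies `E(t) = g + 2∫Lσ ≥ g = E(0)`,
has a critical point at `t = 0`, and its second variation there is
`4 ∫ Re(∂ᵢφ · conj(∂ⱼφ))/σ`, i.e. the `L²`-Bergman pairing (up to a constant). -/
theorem second_variation_energy_varying_target
    {Ω : Type*} [MeasurableSpace Ω] (μ : Measure Ω)
    (σ : Ω → ℝ) (hσmeas : Measurable σ) (hσpos : ∀ z, 0 < σ z) (g : ℝ)
    (H L : ℝ × ℝ → Ω → ℝ) (φ : ℝ × ℝ → Ω → ℂ)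
    (hHdiff : ∀ z, ContDiff ℝ 2 (fun t => H t z))
    (hLdiff : ∀ z, ContDiff ℝ 2 (fun t => L t z))
    (hφdiff : ∀ z, ContDiff ℝ 2 (fun t => φ t z))
    (heq : ∀ t z, H t z * L t z = (‖φ t z‖) ^ 2 / (σ z) ^ 2)
    (hLnonneg : ∀ t z, 0 ≤ L t z)
    (hφ0 : ∀ z, φ 0 z = 0) (hH0 : ∀ z, H 0 z = 1)
    -- measurability in `z` of the densities and their variations
    (hHmeas : ∀ t, AEStronglyMeasurable (fun z => H t z) μ)
    (hLmeas : ∀ t, AEStronglyMeasurable (fun z => L t z) μ)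
    (hH1meas : ∀ t, AEStronglyMeasurable (fun z => fderiv ℝ (fun s => H s z) t) μ)
    (hL1meas : ∀ t, AEStronglyMeasurable (fun z => fderiv ℝ (fun s => L s z) t) μ)
    (hφ1meas : ∀ t, AEStronglyMeasurable (fun z => fderiv ℝ (fun s => φ s z) t) μ)
    -- uniform domination of the integrands and their `t`-derivatives near `t = 0`
    (ε : ℝ) (hε : 0 < ε) (B₀ B₁ B₂ : Ω → ℝ)
    (hB₀ : Integrable B₀ μ) (hB₁ : Integrable B₁ μ) (hB₂ : Integrable B₂ μ)
    (hdom₀ : ∀ t z, ‖t‖ < ε → (|H t z| + |L t z|) * σ z ≤ B₀ z)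
    (hdom₁ : ∀ t z, ‖t‖ < ε →
      (‖fderiv ℝ (fun s => H s z) t‖ + ‖fderiv ℝ (fun s => L s z) t‖) * σ z ≤ B₁ z)
    (hdom₂ : ∀ t z, ‖t‖ < ε →
      (‖iteratedFDeriv ℝ 2 (fun s => H s z) t‖ +
        ‖iteratedFDeriv ℝ 2 (fun s => L s z) t‖) * σ z ≤ B₂ z)
    -- the Jacobian integral is the constant `g` near `t = 0`
    (hJ : ∀ t, ‖t‖ < ε → (∫ z, (H t z - L t z) * σ z ∂μ) = g)
    -- the energy functional
    (E : ℝ × ℝ → ℝ) (hE : E = fun t => ∫ z, (H t z + L t z) * σ z ∂μ) :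
    (∀ t, ‖t‖ < ε → E t = g + 2 * ∫ z, L t z * σ z ∂μ) ∧
    (∀ t, ‖t‖ < ε → g ≤ E t) ∧
    E 0 = g ∧
    (∀ i : Fin 2, fderiv ℝ E 0 (e2 i) = 0) ∧
    (∀ i j : Fin 2,
      fderiv ℝ (fun t => fderiv ℝ E t (e2 i)) 0 (e2 j) =
        4 * ∫ z, ((fderiv ℝ (fun s => φ s z) 0 (e2 i)) *
            (starRingEnd ℂ) (fderiv ℝ (fun s => φ s z) 0 (e2 j))).re / σ z ∂μ) := by
  subst hE
  have hσ0 : ∀ z, (0 : ℝ) ≤ σ z := fun z => (hσpos z).le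
  have measσ : AEStronglyMeasurable σ μ := hσmeas.aestronglyMeasurable
  have hL0 : ∀ z, L 0 z = 0 := by
    intro z
    have h := heq 0 z
    rw [hφ0 z, hH0 z] at h
    simpa using h
  -- integrability of `H σ` and `L σ`
  have hHint : ∀ t, ‖t‖ < ε → Integrable (fun z => H t z * σ z) μ := by
    intro t ht
    refine hB₀.mono' ((hHmeas t).mul measσ) (Eventually.of_forall fun z => ?_)
    have h0 := hdom₀ t z ht
    rw [Real.norm_eq_abs, abs_mul, abs_of_nonneg (hσ0 z)]
    nlinarith [abs_nonneg (L t z), hσ0 z]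
  have hLint : ∀ t, ‖t‖ < ε → Integrable (fun z => L t z * σ z) μ := by
    intro t ht
    refine hB₀.mono' ((hLmeas t).mul measσ) (Eventually.of_forall fun z => ?_)
    have h0 := hdom₀ t z ht
    rw [Real.norm_eq_abs, abs_mul, abs_of_nonneg (hσ0 z)]
    nlinarith [abs_nonneg (H t z), hσ0 z]
  -- part 1
  have part1 : ∀ t, ‖t‖ < ε →
      (∫ z, (H t z + L t z) * σ z ∂μ) = g + 2 * ∫ z, L t z * σ z ∂μ := by
    intro t ht
    have hsub : Integrable (fun z => (H t z - L t z) * σ z) μ := by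
      simpa [sub_mul, Pi.sub_def] using (hHint t ht).sub (hLint t ht)
    have h2L : Integrable (fun z => 2 * (L t z * σ z)) μ := (hLint t ht).const_mul 2
    have e : (fun z => (H t z + L t z) * σ z)
        = fun z => ((H t z - L t z) * σ z) + 2 * (L t z * σ z) := by
      funext z; ring
    rw [e, integral_add hsub h2L, hJ t ht, integral_const_mul]
  -- part 2
  have part2 : ∀ t, ‖t‖ < ε → g ≤ ∫ z, (H t z + L t z) * σ z ∂μ := by
    intro t ht
    rw [part1 t ht]
    have h0 : 0 ≤ ∫ z, L t z * σ z ∂μ :=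
      integral_nonneg fun z => mul_nonneg (hLnonneg t z) (hσ0 z)
    linarith
  -- part 3
  have part3 : (∫ z, (H 0 z + L 0 z) * σ z ∂μ) = g := by
    have e : (fun z => (H 0 z + L 0 z) * σ z) = fun z => (H 0 z - L 0 z) * σ z :=
      funext fun z => by rw [hL0 z]; ring
    rw [e]
    exact hJ 0 (by simpa using hε)
  refine ⟨part1, part2, part3, ?_, ?_⟩
  · -- critical point
    intro i
    have hmin : IsLocalMin (fun t => ∫ z, (H t z + L t z) * σ z ∂μ) 0 := by
      refine Filter.eventually_of_mem (Metric.ball_mem_nhds (0 : ℝ × ℝ) hε) fun t ht => ?_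
      have := part2 t (mem_ball_zero_iff.mp ht)
      simpa [part3] using this
    rw [hmin.fderiv_eq_zero]
    rfl
  · -- second variation
    intro i j
    -- `keyderiv`: differentiation under the integral for `∫ (H + c·L)σ`
    have keyderiv : ∀ (c : ℝ), |c| ≤ 1 → ∀ t₀ : ℝ × ℝ, ‖t₀‖ < ε →
        HasFDerivAt (fun t => ∫ z, (H t z + c * L t z) * σ z ∂μ)
          (∫ z, σ z • (fderiv ℝ (fun s => H s z) t₀
            + c • fderiv ℝ (fun s => L s z) t₀) ∂μ) t₀ := by
      intro c hc t₀ ht₀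
      have hε' : 0 < ε - ‖t₀‖ := by linarith
      have hballsub : ∀ t ∈ Metric.ball t₀ (ε - ‖t₀‖), ‖t‖ < ε := by
        intro t htb
        have h1 : ‖t - t₀‖ < ε - ‖t₀‖ := by rwa [mem_ball_iff_norm] at htb
        calc ‖t‖ = ‖t - t₀ + t₀‖ := by rw [sub_add_cancel]
        _ ≤ ‖t - t₀‖ + ‖t₀‖ := norm_add_le _ _
        _ < ε := by linarith
      refine hasFDerivAt_integral_of_dominated_of_fderiv_le
        (F := fun t z => (H t z + c * L t z) * σ z)
        (F' := fun t z => σ z • (fderiv ℝ (fun s => H s z) t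
          + c • fderiv ℝ (fun s => L s z) t))
        (bound := B₁) (Metric.ball_mem_nhds t₀ hε') ?_ ?_ ?_ ?_ hB₁ ?_
      · exact Eventually.of_forall fun t =>
          ((hHmeas t).add ((hLmeas t).const_mul c)).mul measσ
      · show Integrable (fun z => (H t₀ z + c * L t₀ z) * σ z) μ
        have e : (fun z => (H t₀ z + c * L t₀ z) * σ z)
            = fun z => H t₀ z * σ z + c * (L t₀ z * σ z) := by funext z; ring
        rw [e]
        exact (hHint t₀ ht₀).add ((hLint t₀ ht₀).const_mul c)
      · exact measσ.smul ((hH1meas t₀).add ((hL1meas t₀).const_smul c))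
      · refine Eventually.of_forall fun z t htb => ?_
        beta_reduce
        have htε := hballsub t htb
        have h2 := hdom₁ t z htε
        have hns : ‖σ z • (fderiv ℝ (fun s => H s z) t
            + c • fderiv ℝ (fun s => L s z) t)‖
            = σ z * ‖fderiv ℝ (fun s => H s z) t
              + c • fderiv ℝ (fun s => L s z) t‖ := by
          rw [norm_smul, Real.norm_eq_abs, abs_of_nonneg (hσ0 z)]
        rw [hns]
        have h3 : ‖fderiv ℝ (fun s => H s z) t + c • fderiv ℝ (fun s => L s z) t‖
            ≤ ‖fderiv ℝ (fun s => H s z) t‖ + ‖fderiv ℝ (fun s => L s z) t‖ := by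
          refine (norm_add_le _ _).trans ?_
          rw [norm_smul, Real.norm_eq_abs]
          have := mul_le_of_le_one_left
            (norm_nonneg (fderiv ℝ (fun s => L s z) t)) hc
          linarith
        nlinarith [hσ0 z, norm_nonneg (fderiv ℝ (fun s => H s z) t),
          norm_nonneg (fderiv ℝ (fun s => H s z) t
            + c • fderiv ℝ (fun s => L s z) t)]
      · refine Eventually.of_forall fun z t htb => ?_
        beta_reduce
        have h1 : HasFDerivAt (fun t => H t z + c * L t z)
            (fderiv ℝ (fun s => H s z) t + c • fderiv ℝ (fun s => L s z) t) t :=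
          ((hHdiff z).differentiable two_ne_zero t).hasFDerivAt.add
            ((((hLdiff z).differentiable two_ne_zero t).hasFDerivAt).const_mul c)
        exact h1.mul_const (σ z)
    have hderivE : ∀ t₀ : ℝ × ℝ, ‖t₀‖ < ε →
        HasFDerivAt (fun t => ∫ z, (H t z + L t z) * σ z ∂μ)
          (∫ z, σ z • (fderiv ℝ (fun s => H s z) t₀
            + fderiv ℝ (fun s => L s z) t₀) ∂μ) t₀ := by
      intro t₀ ht₀
      have h := keyderiv 1 (by norm_num) t₀ ht₀
      simpa using h
    have hderivJ : ∀ t₀ : ℝ × ℝ, ‖t₀‖ < ε →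
        HasFDerivAt (fun t => ∫ z, (H t z - L t z) * σ z ∂μ)
          (∫ z, σ z • (fderiv ℝ (fun s => H s z) t₀
            - fderiv ℝ (fun s => L s z) t₀) ∂μ) t₀ := by
      intro t₀ ht₀
      have h := keyderiv (-1) (by norm_num) t₀ ht₀
      have hn : ∀ x : (ℝ × ℝ) →L[ℝ] ℝ, (-1 : ℝ) • x = -x := fun x => neg_one_smul ℝ x
      simpa [hn, neg_one_mul, neg_one_smul, ← sub_eq_add_neg] using h
    -- the Jacobian derivative vanishes
    have hJzero : ∀ t₀ : ℝ × ℝ, ‖t₀‖ < ε →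
        (∫ z, σ z • (fderiv ℝ (fun s => H s z) t₀
          - fderiv ℝ (fun s => L s z) t₀) ∂μ) = 0 := by
      intro t₀ ht₀
      have hconst : (fun t : ℝ × ℝ => ∫ z, (H t z - L t z) * σ z ∂μ)
          =ᶠ[𝓝 t₀] fun _ => g := by
        refine Filter.eventually_of_mem
          (Metric.isOpen_ball.mem_nhds (mem_ball_zero_iff.mpr ht₀)) fun t ht => ?_
        exact hJ t (mem_ball_zero_iff.mp ht)
      have h1 := (hderivJ t₀ ht₀).congr_of_eventuallyEq hconst.symm
      exact h1.unique (hasFDerivAt_const g t₀)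
    -- integrability of the vector-valued first-derivative integrands
    have intS : ∀ (c : ℝ), |c| ≤ 1 → ∀ t₀ : ℝ × ℝ, ‖t₀‖ < ε →
        Integrable (fun z => σ z • (fderiv ℝ (fun s => H s z) t₀
          + c • fderiv ℝ (fun s => L s z) t₀)) μ := by
      intro c hc t₀ ht₀
      refine hB₁.mono' (measσ.smul ((hH1meas t₀).add ((hL1meas t₀).const_smul c)))
        (Eventually.of_forall fun z => ?_)
      have h2 := hdom₁ t₀ z ht₀
      have hns : ‖σ z • (fderiv ℝ (fun s => H s z) t₀
          + c • fderiv ℝ (fun s => L s z) t₀)‖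
          = σ z * ‖fderiv ℝ (fun s => H s z) t₀
            + c • fderiv ℝ (fun s => L s z) t₀‖ := by
        rw [norm_smul, Real.norm_eq_abs, abs_of_nonneg (hσ0 z)]
      rw [hns]
      have h3 : ‖fderiv ℝ (fun s => H s z) t₀ + c • fderiv ℝ (fun s => L s z) t₀‖
          ≤ ‖fderiv ℝ (fun s => H s z) t₀‖ + ‖fderiv ℝ (fun s => L s z) t₀‖ := by
        refine (norm_add_le _ _).trans ?_
        rw [norm_smul, Real.norm_eq_abs]
        have := mul_le_of_le_one_left
          (norm_nonneg (fderiv ℝ (fun s => L s z) t₀)) hc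
        linarith
      nlinarith [hσ0 z, norm_nonneg (fderiv ℝ (fun s => H s z) t₀),
        norm_nonneg (fderiv ℝ (fun s => H s z) t₀
          + c • fderiv ℝ (fun s => L s z) t₀)]
    -- integrability of the scalar first-derivative integrands
    have intH1 : ∀ t₀ : ℝ × ℝ, ‖t₀‖ < ε → ∀ w : ℝ × ℝ, ‖w‖ = 1 →
        Integrable (fun z => σ z * fderiv ℝ (fun s => H s z) t₀ w) μ := by
      intro t₀ ht₀ w hw
      have hm : AEStronglyMeasurable (fun z => fderiv ℝ (fun s => H s z) t₀ w) μ := by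
        have := (ContinuousLinearMap.apply ℝ ℝ w).continuous.comp_aestronglyMeasurable
          (hH1meas t₀)
        simpa using this
      refine hB₁.mono' (measσ.mul hm) (Eventually.of_forall fun z => ?_)
      have h2 := hdom₁ t₀ z ht₀
      have h3 := (fderiv ℝ (fun s => H s z) t₀).le_opNorm w
      rw [hw, mul_one, Real.norm_eq_abs] at h3
      rw [Real.norm_eq_abs, abs_mul, abs_of_nonneg (hσ0 z)]
      nlinarith [hσ0 z, norm_nonneg (fderiv ℝ (fun s => L s z) t₀),
        abs_nonneg (fderiv ℝ (fun s => H s z) t₀ w)]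
    have intL1 : ∀ t₀ : ℝ × ℝ, ‖t₀‖ < ε → ∀ w : ℝ × ℝ, ‖w‖ = 1 →
        Integrable (fun z => σ z * fderiv ℝ (fun s => L s z) t₀ w) μ := by
      intro t₀ ht₀ w hw
      have hm : AEStronglyMeasurable (fun z => fderiv ℝ (fun s => L s z) t₀ w) μ := by
        have := (ContinuousLinearMap.apply ℝ ℝ w).continuous.comp_aestronglyMeasurable
          (hL1meas t₀)
        simpa using this
      refine hB₁.mono' (measσ.mul hm) (Eventually.of_forall fun z => ?_)
      have h2 := hdom₁ t₀ z ht₀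
      have h3 := (fderiv ℝ (fun s => L s z) t₀).le_opNorm w
      rw [hw, mul_one, Real.norm_eq_abs] at h3
      rw [Real.norm_eq_abs, abs_mul, abs_of_nonneg (hσ0 z)]
      nlinarith [hσ0 z, norm_nonneg (fderiv ℝ (fun s => H s z) t₀),
        abs_nonneg (fderiv ℝ (fun s => L s z) t₀ w)]
    -- the first derivative of the energy in direction `e2 i`
    have hfdE : ∀ t₀ : ℝ × ℝ, ‖t₀‖ < ε →
        fderiv ℝ (fun t => ∫ z, (H t z + L t z) * σ z ∂μ) t₀ (e2 i)
          = 2 * ∫ z, σ z * fderiv ℝ (fun s => L s z) t₀ (e2 i) ∂μ := by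
      intro t₀ ht₀
      rw [(hderivE t₀ ht₀).fderiv]
      have hplus : Integrable (fun z => σ z • (fderiv ℝ (fun s => H s z) t₀
          + fderiv ℝ (fun s => L s z) t₀)) μ := by
        simpa using intS 1 (by norm_num) t₀ ht₀
      rw [ContinuousLinearMap.integral_apply hplus (e2 i)]
      have e : (fun z => (σ z • (fderiv ℝ (fun s => H s z) t₀
            + fderiv ℝ (fun s => L s z) t₀)) (e2 i))
          = fun z => σ z * fderiv ℝ (fun s => H s z) t₀ (e2 i)
            + σ z * fderiv ℝ (fun s => L s z) t₀ (e2 i) := by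
        funext z; simp [mul_add]
      rw [e, integral_add (intH1 t₀ ht₀ (e2 i) (norm_e2 i))
        (intL1 t₀ ht₀ (e2 i) (norm_e2 i))]
      have hm : Integrable (fun z => σ z • (fderiv ℝ (fun s => H s z) t₀
          - fderiv ℝ (fun s => L s z) t₀)) μ := by
        have := intS (-1) (by norm_num) t₀ ht₀
        have hn : ∀ x : (ℝ × ℝ) →L[ℝ] ℝ, (-1 : ℝ) • x = -x := fun x => neg_one_smul ℝ x
        simpa [hn, neg_one_smul, ← sub_eq_add_neg] using this
      have h0 : (∫ z, σ z * fderiv ℝ (fun s => H s z) t₀ (e2 i) ∂μ)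
          - (∫ z, σ z * fderiv ℝ (fun s => L s z) t₀ (e2 i) ∂μ) = 0 := by
        have h1 := ContinuousLinearMap.integral_apply hm (e2 i)
        rw [hJzero t₀ ht₀] at h1
        have e' : (fun z => (σ z • (fderiv ℝ (fun s => H s z) t₀
              - fderiv ℝ (fun s => L s z) t₀)) (e2 i))
            = fun z => σ z * fderiv ℝ (fun s => H s z) t₀ (e2 i)
              - σ z * fderiv ℝ (fun s => L s z) t₀ (e2 i) := by
          funext z; simp [mul_sub]
        rw [e', integral_sub (intH1 t₀ ht₀ (e2 i) (norm_e2 i))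
          (intL1 t₀ ht₀ (e2 i) (norm_e2 i))] at h1
        simpa using h1.symm
      linarith
    -- uniform bound for the second-stage derivative
    have hbnd : ∀ (t : ℝ × ℝ) z, ‖t‖ < ε →
        ‖σ z • ((ContinuousLinearMap.apply ℝ ℝ (e2 i)).comp
          (fderiv ℝ (fderiv ℝ (fun s => L s z)) t))‖ ≤ B₂ z := by
      intro t z htε
      have hb : ‖σ z • ((ContinuousLinearMap.apply ℝ ℝ (e2 i)).comp
          (fderiv ℝ (fderiv ℝ (fun s => L s z)) t))‖
          ≤ σ z * ‖iteratedFDeriv ℝ 2 (fun s => L s z) t‖ := by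
        refine ContinuousLinearMap.opNorm_le_bound _
          (mul_nonneg (hσ0 z) (norm_nonneg _)) fun w => ?_
        have hval : (σ z • ((ContinuousLinearMap.apply ℝ ℝ (e2 i)).comp
            (fderiv ℝ (fderiv ℝ (fun s => L s z)) t))) w
            = σ z * fderiv ℝ (fderiv ℝ (fun s => L s z)) t w (e2 i) := by simp
        rw [hval, Real.norm_eq_abs, abs_mul, abs_of_nonneg (hσ0 z)]
        have h2 : fderiv ℝ (fderiv ℝ (fun s => L s z)) t w (e2 i)
            = iteratedFDeriv ℝ 2 (fun s => L s z) t ![w, e2 i] := by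
          rw [iteratedFDeriv_two_apply]
          simp
        rw [h2]
        have h3 := (iteratedFDeriv ℝ 2 (fun s => L s z) t).le_opNorm ![w, e2 i]
        rw [Real.norm_eq_abs] at h3
        have h4 : (∏ k, ‖(![w, e2 i] : Fin 2 → ℝ × ℝ) k‖) = ‖w‖ := by
          rw [Fin.prod_univ_two]
          simp [norm_e2 i]
        rw [h4] at h3
        nlinarith [hσ0 z, norm_nonneg w,
          norm_nonneg (iteratedFDeriv ℝ 2 (fun s => L s z) t)]
      refine hb.trans ?_
      have h5 := hdom₂ t z htε
      nlinarith [norm_nonneg (iteratedFDeriv ℝ 2 (fun s => H s z) t), hσ0 z]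
    -- second-stage differentiation under the integral
    have hG : HasFDerivAt (fun t => ∫ z, σ z * fderiv ℝ (fun s => L s z) t (e2 i) ∂μ)
        (∫ z, σ z • ((ContinuousLinearMap.apply ℝ ℝ (e2 i)).comp
          (fderiv ℝ (fderiv ℝ (fun s => L s z)) 0)) ∂μ) 0 := by
      refine hasFDerivAt_integral_of_dominated_of_fderiv_le
        (F := fun t z => σ z * fderiv ℝ (fun s => L s z) t (e2 i))
        (F' := fun t z => σ z • ((ContinuousLinearMap.apply ℝ ℝ (e2 i)).comp
          (fderiv ℝ (fderiv ℝ (fun s => L s z)) t)))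
        (bound := B₂) (Metric.ball_mem_nhds 0 hε) ?_ ?_ ?_ ?_ hB₂ ?_
      · refine Eventually.of_forall fun t => measσ.mul ?_
        have := (ContinuousLinearMap.apply ℝ ℝ (e2 i)).continuous.comp_aestronglyMeasurable
          (hL1meas t)
        simpa using this
      · show Integrable (fun z => σ z * fderiv ℝ (fun s => L s z) 0 (e2 i)) μ
        exact intL1 0 (by simpa using hε) (e2 i) (norm_e2 i)
      · exact measσ.smul (aesm_second_deriv L hLdiff hL1meas (e2 i))
      · exact Eventually.of_forall fun z t htb => hbnd t z (mem_ball_zero_iff.mp htb)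

      · refine Eventually.of_forall fun z t htb => ?_
        beta_reduce
        have h1 : HasFDerivAt (fun t => fderiv ℝ (fun s => L s z) t (e2 i))
            ((ContinuousLinearMap.apply ℝ ℝ (e2 i)).comp
              (fderiv ℝ (fderiv ℝ (fun s => L s z)) t)) t := by
          have := (ContinuousLinearMap.apply ℝ ℝ (e2 i)).hasFDerivAt.comp t
            (hasFDerivAt_fderiv_of_contDiff (hLdiff z) t)
          simpa [Function.comp_def] using this
        exact h1.const_mul (σ z)
    -- replace the energy derivative by the explicit formula near 0
    have hFeq : (fun t => fderiv ℝ (fun t' => ∫ z, (H t' z + L t' z) * σ z ∂μ) t (e2 i))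
        =ᶠ[𝓝 (0 : ℝ × ℝ)]
        fun t => 2 * ∫ z, σ z * fderiv ℝ (fun s => L s z) t (e2 i) ∂μ := by
      refine Filter.eventually_of_mem (Metric.ball_mem_nhds (0 : ℝ × ℝ) hε) fun t ht => ?_
      exact hfdE t (mem_ball_zero_iff.mp ht)
    rw [hFeq.fderiv_eq, (hG.const_mul 2).fderiv]
    have intK : Integrable (fun z => σ z • ((ContinuousLinearMap.apply ℝ ℝ (e2 i)).comp
        (fderiv ℝ (fderiv ℝ (fun s => L s z)) 0))) μ := by
      refine hB₂.mono' (measσ.smul (aesm_second_deriv L hLdiff hL1meas (e2 i)))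
        (Eventually.of_forall fun z => ?_)
      exact hbnd 0 z (by simpa using hε)
    have hsmul2 : ((2 : ℝ) • ∫ z, σ z • ((ContinuousLinearMap.apply ℝ ℝ (e2 i)).comp
        (fderiv ℝ (fderiv ℝ (fun s => L s z)) 0)) ∂μ) (e2 j)
        = 2 * ((∫ z, σ z • ((ContinuousLinearMap.apply ℝ ℝ (e2 i)).comp
          (fderiv ℝ (fderiv ℝ (fun s => L s z)) 0)) ∂μ) (e2 j)) := by simp
    rw [hsmul2, ContinuousLinearMap.integral_apply intK (e2 j)]
    -- pointwise identification of the second derivative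
    have hptwise : (fun z => (σ z • ((ContinuousLinearMap.apply ℝ ℝ (e2 i)).comp
          (fderiv ℝ (fderiv ℝ (fun s => L s z)) 0))) (e2 j))
        = fun z => 2 * (((fderiv ℝ (fun s => φ s z) 0 (e2 i))
            * (starRingEnd ℂ) (fderiv ℝ (fun s => φ s z) 0 (e2 j))).re / σ z) := by
      funext z
      have hval : (σ z • ((ContinuousLinearMap.apply ℝ ℝ (e2 i)).comp
          (fderiv ℝ (fderiv ℝ (fun s => L s z)) 0))) (e2 j)
          = σ z * fderiv ℝ (fderiv ℝ (fun s => L s z)) 0 (e2 j) (e2 i) := by simp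
      have hsd := pointwise_second_deriv (hσpos z) (hHdiff z) (hLdiff z) (hφdiff z)
        (fun t => heq t z) (fun t => hLnonneg t z) (hφ0 z) (hH0 z) (e2 j) (e2 i)
      rw [hval, hsd]
      have hσne : σ z ≠ 0 := (hσpos z).ne'
      have hre : ((fderiv ℝ (fun s => φ s z) 0 (e2 j))
            * (starRingEnd ℂ) (fderiv ℝ (fun s => φ s z) 0 (e2 i))).re
          = ((fderiv ℝ (fun s => φ s z) 0 (e2 i))
            * (starRingEnd ℂ) (fderiv ℝ (fun s => φ s z) 0 (e2 j))).re := by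
        simp only [Complex.mul_re, Complex.conj_re, Complex.conj_im]
        ring
      rw [hre]
      field_simp
    rw [hptwise, integral_const_mul]
    ring
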